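/- arXiv:2110.13895 — 2 statements merged into one kernel-verified Lean document; each statement's English description precedes it below -/
import Mathlib

section
/- Let $A$ be a finite subset of $\mathbb{Z}^2$ with $n$ elements, and let $r \ge 0$. If $\mathrm{diam}(A) > 2\theta_{n-1}(r)$, then there exists a partition of $A$ into $k \ge 2$ clusters $A^1,\dots,A^k$ such that each $A^i = A \cap D_{x_i}(\theta^{(i)})$ for some $x_i \in \mathbb{Z}^2$ and radius $\theta^{(i)} \in [r, \theta_{n-1}(r)]$, and for all $i \ne j$, $\mathrm{dist}(A^i, A^j) > \exp(\max\{\theta^{(i)}, \theta^{(j)}\})$. -/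
/-- Iterated exponentials: `θ_0(r) = r`, `θ_m(r) = θ_{m-1}(r) + exp(θ_{m-1}(r))`. -/
noncomputable def theta : ℕ → ℝ → ℝ
  | 0, r => r
  | m + 1, r => theta m r + Real.exp (theta m r)

/-- Euclidean norm on `ℤ²`. -/
noncomputable def znorm (p : ℤ × ℤ) : ℝ := Real.sqrt ((p.1 : ℝ) ^ 2 + (p.2 : ℝ) ^ 2)

/-- Euclidean distance on `ℤ²`. -/
noncomputable def zdist (p q : ℤ × ℤ) : ℝ := znorm (p - q)

lemma theta_succ (m : ℕ) (r : ℝ) : theta (m + 1) r = theta m r + Real.exp (theta m r) := rfl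

lemma theta_zero (r : ℝ) : theta 0 r = r := rfl

lemma theta_mono_m (r : ℝ) : Monotone fun m => theta m r := by
  apply monotone_nat_of_le_succ
  intro m
  have := Real.exp_pos (theta m r)
  simp only [theta_succ]
  linarith

lemma le_theta (m : ℕ) (r : ℝ) : r ≤ theta m r := theta_mono_m r (Nat.zero_le m)

lemma theta_nonneg (m : ℕ) {r : ℝ} (hr : 0 ≤ r) : 0 ≤ theta m r := hr.trans (le_theta m r)

lemma theta_mono_r (m : ℕ) {r s : ℝ} (h : r ≤ s) : theta m r ≤ theta m s := by
  induction m with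
  | zero => exact h
  | succ m ih =>
    rw [theta_succ, theta_succ]
    have := Real.exp_le_exp.mpr ih
    linarith

lemma theta_continuous (m : ℕ) : Continuous (theta m) := by
  induction m with
  | zero => exact continuous_id
  | succ m ih =>
    have h : theta (m + 1) = fun r => theta m r + Real.exp (theta m r) := by
      funext r; rfl
    rw [h]
    exact ih.add (Real.continuous_exp.comp ih)

lemma two_mul_le_exp {t : ℝ} (ht : 0 ≤ t) : 2 * t ≤ Real.exp t := by
  rcases le_total t 1 with h | h
  · nlinarith [Real.add_one_le_exp t]
  · have h1 : (t - 1) + 1 ≤ Real.exp (t - 1) := Real.add_one_le_exp _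
    have h2 : Real.exp (t - 1) * Real.exp 1 = Real.exp t := by
      rw [← Real.exp_add]; ring_nf
    have h3 : t * Real.exp 1 ≤ Real.exp (t - 1) * Real.exp 1 :=
      mul_le_mul_of_nonneg_right (by linarith) (Real.exp_pos 1).le
    nlinarith [Real.exp_one_gt_d9]

lemma merge_bound (r : ℝ) (hr : 0 ≤ r) (m₁ m₂ : ℕ) (h : m₂ ≤ m₁) :
    2 * (theta m₂ r - r) + Real.exp (theta m₁ r) + (theta m₁ r - r)
      ≤ theta (m₁ + m₂ + 1) r - r := by
  cases m₂ with
  | zero =>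
    rw [theta_zero]
    have h1 : theta (m₁ + 0 + 1) r = theta m₁ r + Real.exp (theta m₁ r) := by
      rw [Nat.add_zero, theta_succ]
    rw [h1]; linarith
  | succ k =>
    have h1 : theta (m₁ + 2) r ≤ theta (m₁ + (k + 1) + 1) r := theta_mono_m r (by omega)
    have h2 : theta (m₁ + 2) r = theta (m₁ + 1) r + Real.exp (theta (m₁ + 1) r) :=
      theta_succ _ r
    have h3 : theta (m₁ + 1) r = theta m₁ r + Real.exp (theta m₁ r) := theta_succ _ r
    have h4 : theta (k + 1) r ≤ theta (m₁ + 1) r := theta_mono_m r (by omega)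
    have h5 : 2 * theta (m₁ + 1) r ≤ Real.exp (theta (m₁ + 1) r) :=
      two_mul_le_exp (theta_nonneg _ hr)
    linarith

noncomputable def cfy (p : ℤ × ℤ) : ℂ := ⟨(p.1 : ℝ), (p.2 : ℝ)⟩

lemma zdist_eq (p q : ℤ × ℤ) : zdist p q = ‖cfy p - cfy q‖ := by
  have h : cfy p - cfy q = ⟨(p.1 : ℝ) - (q.1 : ℝ), (p.2 : ℝ) - (q.2 : ℝ)⟩ := by
    apply Complex.ext <;> simp [cfy]
  rw [h, Complex.norm_def, Complex.normSq_mk]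
  unfold zdist znorm
  have h1 : (((p - q).1 : ℤ) : ℝ) = (p.1 : ℝ) - q.1 := by
    push_cast [Prod.fst_sub]; ring
  have h2 : (((p - q).2 : ℤ) : ℝ) = (p.2 : ℝ) - q.2 := by
    push_cast [Prod.snd_sub]; ring
  rw [h1, h2]; ring_nf

lemma zdist_comm (p q : ℤ × ℤ) : zdist p q = zdist q p := by
  rw [zdist_eq, zdist_eq]
  exact norm_sub_rev _ _

lemma zdist_triangle (p q s : ℤ × ℤ) : zdist p s ≤ zdist p q + zdist q s := by
  rw [zdist_eq, zdist_eq, zdist_eq]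
  exact norm_sub_le_norm_sub_add_norm_sub _ _ _

lemma zdist_nonneg (p q : ℤ × ℤ) : 0 ≤ zdist p q := Real.sqrt_nonneg _

lemma zdist_self (p : ℤ × ℤ) : zdist p p = 0 := by
  simp [zdist_eq]

/-- Invariant of the clustering algorithm: `S` is a set of entries
`(cluster, center, level)` forming a partition of `A`, where each cluster is
contained in the ball of radius `theta m r - r` around its center and the level
is bounded by the cluster size minus one. -/
structure ClInv (A : Finset (ℤ × ℤ)) (r : ℝ) (S : Finset (Finset (ℤ × ℤ) × (ℤ × ℤ) × ℕ)) :
    Prop where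
  subA : ∀ e ∈ S, e.1 ⊆ A
  nonemp : ∀ e ∈ S, e.1.Nonempty
  mem_center : ∀ e ∈ S, e.2.1 ∈ e.1
  card_b : ∀ e ∈ S, e.2.2 + 1 ≤ e.1.card
  rad : ∀ e ∈ S, ∀ p ∈ e.1, zdist p e.2.1 ≤ theta e.2.2 r - r
  cover : ∀ p ∈ A, ∃ e ∈ S, p ∈ e.1
  disj : ∀ e₁ ∈ S, ∀ e₂ ∈ S, e₁ ≠ e₂ → Disjoint e₁.1 e₂.1

def Stopped (r : ℝ) (S : Finset (Finset (ℤ × ℤ) × (ℤ × ℤ) × ℕ)) : Prop :=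
  ∀ e₁ ∈ S, ∀ e₂ ∈ S, e₁ ≠ e₂ → ∀ p ∈ e₁.1, ∀ q ∈ e₂.1,
    Real.exp (max (theta e₁.2.2 r) (theta e₂.2.2 r)) < zdist p q

lemma merge_step (A : Finset (ℤ × ℤ)) (r : ℝ) (hr : 0 ≤ r)
    (S : Finset (Finset (ℤ × ℤ) × (ℤ × ℤ) × ℕ)) (hS : ClInv A r S)
    {e₁ e₂ : Finset (ℤ × ℤ) × (ℤ × ℤ) × ℕ}
    (h₁ : e₁ ∈ S) (h₂ : e₂ ∈ S) (hne : e₁ ≠ e₂) (hm : e₂.2.2 ≤ e₁.2.2)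
    {p q : ℤ × ℤ} (hp : p ∈ e₁.1) (hq : q ∈ e₂.1)
    (hpq : zdist p q ≤ Real.exp (theta e₁.2.2 r)) :
    ∃ T, ClInv A r T ∧ T.card < S.card := by
  classical
  set e' : Finset (ℤ × ℤ) × (ℤ × ℤ) × ℕ :=
    (e₁.1 ∪ e₂.1, e₁.2.1, e₁.2.2 + e₂.2.2 + 1) with he'
  set T : Finset (Finset (ℤ × ℤ) × (ℤ × ℤ) × ℕ) :=
    insert e' ((S.erase e₁).erase e₂) with hT
  have hd12 : Disjoint e₁.1 e₂.1 := hS.disj e₁ h₁ e₂ h₂ hne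
  have hmemT : ∀ e, e ∈ T ↔ e = e' ∨ (e ∈ S ∧ e ≠ e₁ ∧ e ≠ e₂) := by
    intro e
    simp only [hT, Finset.mem_insert, Finset.mem_erase]
    tauto
  have hradnew : ∀ z ∈ e'.1, zdist z e'.2.1 ≤ theta e'.2.2 r - r := by
    intro z hz
    simp only [he', Finset.mem_union] at hz
    have hmono : theta e₁.2.2 r ≤ theta (e₁.2.2 + e₂.2.2 + 1) r :=
      theta_mono_m r (by omega)
    rcases hz with hz | hz
    · have := hS.rad e₁ h₁ z hz
      simp only [he']
      linarith
    · have t1 : zdist z e₁.2.1 ≤ zdist z q + zdist q e₁.2.1 := zdist_triangle _ _ _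
      have t2 : zdist z q ≤ zdist z e₂.2.1 + zdist e₂.2.1 q := zdist_triangle _ _ _
      have t3 : zdist q e₁.2.1 ≤ zdist q p + zdist p e₁.2.1 := zdist_triangle _ _ _
      have r1 : zdist z e₂.2.1 ≤ theta e₂.2.2 r - r := hS.rad e₂ h₂ z hz
      have r2 : zdist e₂.2.1 q = zdist q e₂.2.1 := zdist_comm _ _
      have r2' : zdist q e₂.2.1 ≤ theta e₂.2.2 r - r := hS.rad e₂ h₂ q hq
      have r3 : zdist q p = zdist p q := zdist_comm _ _
      have r4 : zdist p e₁.2.1 ≤ theta e₁.2.2 r - r := hS.rad e₁ h₁ p hp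
      have key := merge_bound r hr e₁.2.2 e₂.2.2 hm
      simp only [he']
      linarith
  refine ⟨T, ?_, ?_⟩
  · constructor
    · intro e he
      rcases (hmemT e).mp he with rfl | ⟨heS, _, _⟩
      · exact Finset.union_subset (hS.subA e₁ h₁) (hS.subA e₂ h₂)
      · exact hS.subA e heS
    · intro e he
      rcases (hmemT e).mp he with rfl | ⟨heS, _, _⟩
      · exact (hS.nonemp e₁ h₁).mono Finset.subset_union_left
      · exact hS.nonemp e heS
    · intro e he
      rcases (hmemT e).mp he with rfl | ⟨heS, _, _⟩
      · exact Finset.mem_union_left _ (hS.mem_center e₁ h₁)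
      · exact hS.mem_center e heS
    · intro e he
      rcases (hmemT e).mp he with rfl | ⟨heS, _, _⟩
      · have hc : (e₁.1 ∪ e₂.1).card = e₁.1.card + e₂.1.card :=
          Finset.card_union_of_disjoint hd12
      

        have b1 := hS.card_b e₁ h₁
        have b2 := hS.card_b e₂ h₂
        simp only [he', hc]
        omega
      · exact hS.card_b e heS
    · intro e he
      rcases (hmemT e).mp he with rfl | ⟨heS, _, _⟩
      · exact hradnew
      · exact hS.rad e heS
    · intro z hz
      obtain ⟨e, heS, hze⟩ := hS.cover z hz
      by_cases h1 : e = e₁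
      · subst h1
        exact ⟨e', (hmemT e').mpr (Or.inl rfl), Finset.mem_union_left _ hze⟩
      · by_cases h2 : e = e₂
        · subst h2
          exact ⟨e', (hmemT e').mpr (Or.inl rfl), Finset.mem_union_right _ hze⟩
        · exact ⟨e, (hmemT e).mpr (Or.inr ⟨heS, h1, h2⟩), hze⟩
    · intro f hf g hg hfg
      rcases (hmemT f).mp hf with rfl | ⟨hfS, hf1, hf2⟩
      · rcases (hmemT g).mp hg with rfl | ⟨hgS, hg1, hg2⟩
        · exact absurd rfl hfg
        · simp only [he']
          exact Finset.disjoint_union_left.mpr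
            ⟨hS.disj e₁ h₁ g hgS (fun h => hg1 h.symm),
             hS.disj e₂ h₂ g hgS (fun h => hg2 h.symm)⟩
      · rcases (hmemT g).mp hg with rfl | ⟨hgS, hg1, hg2⟩
        · have : Disjoint e'.1 f.1 := by
            simp only [he']
            exact Finset.disjoint_union_left.mpr
              ⟨hS.disj e₁ h₁ f hfS (fun h => hf1 h.symm),
               hS.disj e₂ h₂ f hfS (fun h => hf2 h.symm)⟩
          exact this.symm
        · exact hS.disj f hfS g hgS hfg
  · have hS2 : 2 ≤ S.card := Finset.one_lt_card.mpr ⟨e₁, h₁, e₂, h₂, hne⟩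
    have he2 : e₂ ∈ S.erase e₁ := Finset.mem_erase.mpr ⟨fun h => hne h.symm, h₂⟩
    have hc1 : (S.erase e₁).card = S.card - 1 := Finset.card_erase_of_mem h₁
    have hc2 : ((S.erase e₁).erase e₂).card = S.card - 1 - 1 := by
      rw [Finset.card_erase_of_mem he2, hc1]
    have hle : T.card ≤ ((S.erase e₁).erase e₂).card + 1 := by
      rw [hT]; exact Finset.card_insert_le _ _
    omega

lemma loop (A : Finset (ℤ × ℤ)) (r : ℝ) (hr : 0 ≤ r) :
    ∀ k (S : Finset (Finset (ℤ × ℤ) × (ℤ × ℤ) × ℕ)), S.card ≤ k → ClInv A r S →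
      ∃ T, ClInv A r T ∧ Stopped r T := by
  intro k
  induction k with
  | zero =>
    intro S hc hInv
    refine ⟨S, hInv, ?_⟩
    have hS : S = ∅ := Finset.card_eq_zero.mp (Nat.le_antisymm hc (Nat.zero_le _))
    subst hS
    intro e₁ he₁
    simp at he₁
  | succ k ih =>
    intro S hc hInv
    by_cases hstop : Stopped r S
    · exact ⟨S, hInv, hstop⟩
    · unfold Stopped at hstop
      push_neg at hstop
      obtain ⟨e₁, h₁, e₂, h₂, hne, p, hp, q, hq, hpq⟩ := hstop
      rcases le_total e₂.2.2 e₁.2.2 with h | h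
      · have hmax : max (theta e₁.2.2 r) (theta e₂.2.2 r) = theta e₁.2.2 r :=
          max_eq_left (theta_mono_m r h)
        rw [hmax] at hpq
        obtain ⟨T, hT, hTc⟩ := merge_step A r hr S hInv h₁ h₂ hne h hp hq hpq
        exact ih T (by omega) hT
      · have hmax : max (theta e₁.2.2 r) (theta e₂.2.2 r) = theta e₂.2.2 r :=
          max_eq_right (theta_mono_m r h)
        rw [hmax] at hpq
        have hpq' : zdist q p ≤ Real.exp (theta e₂.2.2 r) := by
          rw [zdist_comm]; exact hpq
        obtain ⟨T, hT, hTc⟩ :=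
          merge_step A r hr S hInv h₂ h₁ (Ne.symm hne) h hq hp hpq'
        exact ih T (by omega) hT


/-- Exponential clustering (Lemma 4.2): if a finite `A ⊂ ℤ²` with `n` elements has
diameter greater than `2 θ_{n-1}(r)`, then `A` can be partitioned into `k ≥ 2`
clusters `A^i = A ∩ D_{x_i}(θ^{(i)})` with radii `θ^{(i)} ∈ [r, θ_{n-1}(r)]`, such that
distinct clusters are at distance greater than `exp(max{θ^{(i)}, θ^{(j)}})`. -/
theorem stmt4 (A : Finset (ℤ × ℤ)) (n : ℕ) (hn : A.card = n) (r : ℝ) (hr : 0 ≤ r)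
    (hdiam : ∃ x ∈ A, ∃ y ∈ A, 2 * theta (n - 1) r < zdist x y) :
    ∃ k : ℕ, 2 ≤ k ∧
      ∃ (As : Fin k → Finset (ℤ × ℤ)) (c : Fin k → ℤ × ℤ) (ρ : Fin k → ℝ),
        (∀ i, (As i).Nonempty) ∧
        (∀ i, r ≤ ρ i ∧ ρ i ≤ theta (n - 1) r) ∧
        (∀ i, ∀ p : ℤ × ℤ, p ∈ As i ↔ p ∈ A ∧ zdist p (c i) < ρ i) ∧
        (∀ p ∈ A, ∃ i, p ∈ As i) ∧
        (∀ i j, i ≠ j → Disjoint (As i) (As j)) ∧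
        (∀ i j, i ≠ j → ∀ p ∈ As i, ∀ q ∈ As j,
          Real.exp (max (ρ i) (ρ j)) < zdist p q) := by
  classical
  obtain ⟨x, hx, y, hy, hxy⟩ := hdiam
  have hθn : 0 ≤ theta (n - 1) r := theta_nonneg _ hr
  have hnexy : x ≠ y := by
    rintro rfl
    rw [zdist_self] at hxy
    linarith
  have hn2 : 2 ≤ n := by
    have h := Finset.one_lt_card.mpr ⟨x, hx, y, hy, hnexy⟩
    omega
  -- choose a positive base radius r' ≥ r
  obtain ⟨r', hr'pos, hrr', hxy', hth'⟩ :
      ∃ r', 0 < r' ∧ r ≤ r' ∧ 2 * theta (n - 1) r' < zdist x y ∧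
        theta (n - 2) r' ≤ theta (n - 1) r := by
    rcases hr.eq_or_lt with h0 | h0
    · -- r = 0 : use continuity of theta to find a small positive r'
      subst h0
      have hcont1 : Filter.Tendsto (fun s => 2 * theta (n - 1) s)
          (nhdsWithin 0 (Set.Ioi 0)) (nhds (2 * theta (n - 1) 0)) :=
        ((((theta_continuous (n - 1)).tendsto 0).const_mul 2)).mono_left
          nhdsWithin_le_nhds
      have hcont2 : Filter.Tendsto (theta (n - 2))
          (nhdsWithin 0 (Set.Ioi 0)) (nhds (theta (n - 2) 0)) :=
        ((theta_continuous (n - 2)).tendsto 0).mono_left nhdsWithin_le_nhds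
      have hlt2 : theta (n - 2) 0 < theta (n - 1) 0 := by
        have hsucc : n - 1 = (n - 2) + 1 := by omega
        rw [hsucc, theta_succ]
        have := Real.exp_pos (theta (n - 2) 0)
        linarith
      have e1 : ∀ᶠ s in nhdsWithin 0 (Set.Ioi 0), 2 * theta (n - 1) s < zdist x y :=
        hcont1.eventually_lt_const hxy
      have e2 : ∀ᶠ s in nhdsWithin 0 (Set.Ioi 0), theta (n - 2) s < theta (n - 1) 0 :=
        hcont2.eventually_lt_const hlt2
      have e3 : ∀ᶠ s in nhdsWithin (0:ℝ) (Set.Ioi 0), s ∈ Set.Ioi (0:ℝ) :=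
        eventually_mem_nhdsWithin
      obtain ⟨s, hs1, hs2, hs3⟩ := (e1.and (e2.and e3)).exists
      exact ⟨s, Set.mem_Ioi.mp hs3, (Set.mem_Ioi.mp hs3).le, hs1, hs2.le⟩
    · exact ⟨r, h0, le_refl r, hxy, theta_mono_m r (by omega)⟩
  -- initial state: singletons
  set S₀ : Finset (Finset (ℤ × ℤ) × (ℤ × ℤ) × ℕ) :=
    A.image (fun p => ({p}, p, 0)) with hS₀
  have hInv₀ : ClInv A r' S₀ := by
    constructor
    · intro e he
      simp only [hS₀, Finset.mem_image] at he
      obtain ⟨a, ha, rfl⟩ := he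
      simpa using ha
    · intro e he
      simp only [hS₀, Finset.mem_image] at he
      obtain ⟨a, ha, rfl⟩ := he
      exact ⟨a, Finset.mem_singleton_self a⟩
    · intro e he
      simp only [hS₀, Finset.mem_image] at he
      obtain ⟨a, ha, rfl⟩ := he
      exact Finset.mem_singleton_self a
    · intro e he
      simp only [hS₀, Finset.mem_image] at he
      obtain ⟨a, ha, rfl⟩ := he
      simp
    · intro e he
      simp only [hS₀, Finset.mem_image] at he
      obtain ⟨a, ha, rfl⟩ := he
      intro p hp
      simp only [Finset.mem_singleton] at hp
      subst hp
      simp only [zdist_self, theta_zero]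
      linarith
    · intro p hp
      refine ⟨({p}, p, 0), ?_, Finset.mem_singleton_self p⟩
      simp only [hS₀, Finset.mem_image]
      exact ⟨p, hp, rfl⟩
    · intro e₁ h₁ e₂ h₂ hne
      simp only [hS₀, Finset.mem_image] at h₁ h₂
      obtain ⟨a, ha, rfl⟩ := h₁
      obtain ⟨b, hb, rfl⟩ := h₂
      have hab : a ≠ b := fun h => hne (by rw [h])
      exact Finset.disjoint_singleton.mpr hab
  obtain ⟨T, hT, hstop⟩ := loop A r' hr'pos.le S₀.card S₀ le_rfl hInv₀
  -- at least two clusters remain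
  have hk2 : 2 ≤ T.card := by
    by_contra hk
    push_neg at hk
    obtain ⟨ex, hexT, hxex⟩ := hT.cover x hx
    obtain ⟨ey, heyT, hyey⟩ := hT.cover y hy
    have heq : ex = ey := Finset.card_le_one.mp (by omega) ex hexT ey heyT
    subst heq
    have hmle : ex.2.2 ≤ n - 1 := by
      have h2 := hT.card_b ex hexT
      have h3 : ex.1.card ≤ n := hn ▸ Finset.card_le_card (hT.subA ex hexT)
      omega
    have hrx := hT.rad ex hexT x hxex
    have hry := hT.rad ex hexT y hyey
    have htri : zdist x y ≤ zdist x ex.2.1 + zdist y ex.2.1 := by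
      calc zdist x y ≤ zdist x ex.2.1 + zdist ex.2.1 y := zdist_triangle _ _ _
        _ = zdist x ex.2.1 + zdist y ex.2.1 := by rw [zdist_comm ex.2.1 y]
    have hmono : theta ex.2.2 r' ≤ theta (n - 1) r' := theta_mono_m r' hmle
    linarith
  -- every cluster has level at most n - 2
  have hbound : ∀ e ∈ T, e.2.2 + 2 ≤ n := by
    intro e he
    obtain ⟨e', he', hee⟩ := Set.Nontrivial.exists_ne ((Finset.one_lt_card_iff_nontrivial (s := T)).mp (by omega)) e
    have hd : Disjoint e.1 e'.1 := hT.disj e he e' he' (fun h => hee (h ▸ rfl))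
    have hu : e.1.card + e'.1.card ≤ n := by
      have hc1 := Finset.card_union_of_disjoint hd
      have hsub : e.1 ∪ e'.1 ⊆ A :=
        Finset.union_subset (hT.subA e he) (hT.subA e' he')
      have hc2 := Finset.card_le_card hsub
      omega
    have h1 : 1 ≤ e'.1.card := Finset.card_pos.mpr (hT.nonemp e' he')
    have h2 := hT.card_b e he
    omega
  -- index the clusters
  set g : Fin T.card → Finset (ℤ × ℤ) × (ℤ × ℤ) × ℕ :=
    fun i => (T.equivFin.symm i).1 with hg
  have hgT : ∀ i, g i ∈ T := fun i => (T.equivFin.symm i).2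
  have hginj : Function.Injective g := by
    intro i j hij
    have h : T.equivFin.symm i = T.equivFin.symm j := Subtype.ext hij
    exact T.equivFin.symm.injective h
  refine ⟨T.card, hk2, fun i => (g i).1, fun i => (g i).2.1,
    fun i => theta (g i).2.2 r', ?_, ?_, ?_, ?_, ?_, ?_⟩
  · exact fun i => hT.nonemp _ (hgT i)
  · intro i
    constructor
    · exact hrr'.trans (le_theta _ _)
    · have h1 : (g i).2.2 ≤ n - 2 := by have := hbound _ (hgT i); omega
      exact (theta_mono_m r' h1).trans hth'
  · intro i p
    constructor
    · intro hp
      refine ⟨hT.subA _ (hgT i) hp, ?_⟩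
      have := hT.rad _ (hgT i) p hp
      linarith
    · rintro ⟨hpA, hplt⟩
      by_contra hnot
      obtain ⟨e, he, hpe⟩ := hT.cover p hpA
      have hne' : e ≠ g i := by
        intro h
        apply hnot
        show p ∈ (g i).1
        rw [← h]
        exact hpe
      have hst := hstop e he (g i) (hgT i) hne' p hpe ((g i).2.1)
        (hT.mem_center _ (hgT i))
      have hle : theta (g i).2.2 r' ≤ max (theta e.2.2 r') (theta (g i).2.2 r') :=
        le_max_right _ _
      have hexp := Real.add_one_le_exp (max (theta e.2.2 r') (theta (g i).2.2 r'))
      linarith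
  · intro p hp
    obtain ⟨e, he, hpe⟩ := hT.cover p hp
    refine ⟨T.equivFin ⟨e, he⟩, ?_⟩
    have : g (T.equivFin ⟨e, he⟩) = e := by
      simp only [hg, Equiv.symm_apply_apply]
    show p ∈ (g (T.equivFin ⟨e, he⟩)).1
    rw [this]
    exact hpe
  · intro i j hij
    exact hT.disj _ (hgT i) _ (hgT j) (fun h => hij (hginj h))
  · intro i j hij p hp q hq
    exact hstop _ (hgT i) _ (hgT j) (fun h => hij (hginj h)) p hp q hq
end

section
/- Let $r \ge 1$ and $x \in \mathbb{Z}^2$, and let $\mu$ be any probability measure on $C_x(r)$, the exterior boundary of the disk $D_x(r)$. If $r \ge 2(|x|+1)$, then $\left|\sum_{y \in C_x(r)} \mu(y)\,\mathfrak{a}(y) - \mathfrak{a}'(r)\right| \le \left(\tfrac{5}{2\pi} + 2\lambda\right)\dfrac{|x|+1}{r}$, where $\mathfrak{a}'(r) = \tfrac{2}{\pi}\log r + \kappa$. -/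
/-- Nearest-neighbor adjacency in `ℤ²`. -/
def Adj (p q : ℤ × ℤ) : Prop := (p.1 - q.1).natAbs + (p.2 - q.2).natAbs = 1

/-- `f` is (discretely) harmonic on `s ⊆ ℤ²`. -/
def HarmonicOn (f : ℤ × ℤ → ℝ) (s : Set (ℤ × ℤ)) : Prop :=
  ∀ p ∈ s, f p = (f (p + ((1 : ℤ), (0 : ℤ))) + f (p - ((1 : ℤ), (0 : ℤ)))
    + f (p + ((0 : ℤ), (1 : ℤ))) + f (p - ((0 : ℤ), (1 : ℤ)))) / 4

lemma znorm_nonneg' (p : ℤ × ℤ) : 0 ≤ znorm p := Real.sqrt_nonneg _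

lemma znorm_complex' (p : ℤ × ℤ) : znorm p = ‖(⟨(p.1 : ℝ), (p.2 : ℝ)⟩ : ℂ)‖ := by
  rw [znorm, Complex.norm_def, Complex.normSq_mk]; ring_nf

lemma znorm_add_le' (p q : ℤ × ℤ) : znorm (p + q) ≤ znorm p + znorm q := by
  rw [znorm_complex', znorm_complex', znorm_complex']
  have h : (⟨((p + q).1 : ℝ), ((p + q).2 : ℝ)⟩ : ℂ)
      = (⟨(p.1 : ℝ), (p.2 : ℝ)⟩ : ℂ) + ⟨(q.1 : ℝ), (q.2 : ℝ)⟩ := by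
    simp [Complex.ext_iff]
  rw [h]
  exact norm_add_le _ _

lemma znorm_neg' (p : ℤ × ℤ) : znorm (-p) = znorm p := by
  simp only [znorm, Prod.fst_neg, Prod.snd_neg, Int.cast_neg, neg_sq]

lemma znorm_adj' (y q : ℤ × ℤ) (h : Adj y q) : znorm (y - q) = 1 := by
  unfold Adj at h
  have h1 : ((y.1 - q.1 = 1 ∨ y.1 - q.1 = -1) ∧ y.2 - q.2 = 0)
      ∨ (y.1 - q.1 = 0 ∧ (y.2 - q.2 = 1 ∨ y.2 - q.2 = -1)) := by omega
  rcases h1 with ⟨h2 | h2, h3⟩ | ⟨h2, h3 | h3⟩ <;>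
    simp [znorm, Prod.fst_sub, Prod.snd_sub, h2, h3]

lemma log_one_sub_ge' (v : ℝ) (h0 : 0 ≤ v) (h1 : v ≤ 1/2) :
    -(2 * Real.log 2 * v) ≤ Real.log (1 - v) := by
  have hc := (strictConcaveOn_log_Ioi.concaveOn).2
    (by norm_num : (1:ℝ) ∈ Set.Ioi (0:ℝ)) (by norm_num : (1/2:ℝ) ∈ Set.Ioi (0:ℝ))
    (show (0:ℝ) ≤ 1 - 2*v by linarith) (show (0:ℝ) ≤ 2*v by linarith)
    (show (1 - 2*v) + 2*v = 1 by ring)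
  have h2 : (1 - 2*v) • (1:ℝ) + (2*v) • (1/2:ℝ) = 1 - v := by
    simp [smul_eq_mul]; ring
  rw [h2] at hc
  have h3 : Real.log (1/2) = -Real.log 2 := by
    rw [show (1/2:ℝ) = 2⁻¹ by norm_num, Real.log_inv]
  simp only [smul_eq_mul, Real.log_one, h3] at hc
  linarith

lemma lam_lower' (a : ℤ × ℤ → ℝ) (κ lam : ℝ)
    (haharm : HarmonicOn a {z | z ≠ 0})
    (haexp : ∀ z : ℤ × ℤ, z ≠ 0 →
      |a z - (2 / Real.pi) * Real.log (znorm z) - κ| ≤ lam / (znorm z) ^ 2) :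
    2 * Real.log 2 - 5/4 ≤ Real.pi * lam := by
  have hπ : (0:ℝ) < Real.pi := Real.pi_pos
  have conv : ∀ z : ℤ × ℤ, z ≠ 0 →
      |Real.pi * a z - 2 * Real.log (znorm z) - Real.pi * κ|
        ≤ Real.pi * lam / (znorm z) ^ 2 := by
    intro z hz
    have h := haexp z hz
    have e : Real.pi * a z - 2 * Real.log (znorm z) - Real.pi * κ
        = Real.pi * (a z - (2 / Real.pi) * Real.log (znorm z) - κ) := by
      field_simp
    rw [e, abs_mul, abs_of_pos hπ, mul_div_assoc]
    exact mul_le_mul_of_nonneg_left h hπ.le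
  have h1 : a (1,1) = (a (2,1) + a (0,1) + a (1,2) + a (1,0))/4 := by
    have h := haharm (1,1) (by norm_num [Prod.ext_iff])
    rw [show ((1,1) : ℤ×ℤ) + (1,0) = (2,1) from by norm_num [Prod.ext_iff],
        show ((1,1) : ℤ×ℤ) - (1,0) = (0,1) from by norm_num [Prod.ext_iff],
        show ((1,1) : ℤ×ℤ) + (0,1) = (1,2) from by norm_num [Prod.ext_iff],
        show ((1,1) : ℤ×ℤ) - (0,1) = (1,0) from by norm_num [Prod.ext_iff]] at h
    exact h
  have h2 : a (2,0) = (a (3,0) + a (1,0) + a (2,1) + a (2,-1))/4 := by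
    have h := haharm (2,0) (by norm_num [Prod.ext_iff])
    rw [show ((2,0) : ℤ×ℤ) + (1,0) = (3,0) from by norm_num [Prod.ext_iff],
        show ((2,0) : ℤ×ℤ) - (1,0) = (1,0) from by norm_num [Prod.ext_iff],
        show ((2,0) : ℤ×ℤ) + (0,1) = (2,1) from by norm_num [Prod.ext_iff],
        show ((2,0) : ℤ×ℤ) - (0,1) = (2,-1) from by norm_num [Prod.ext_iff]] at h
    exact h
  have h3 : a (0,2) = (a (1,2) + a (-1,2) + a (0,3) + a (0,1))/4 := by
    have h := haharm (0,2) (by norm_num [Prod.ext_iff])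
    rw [show ((0,2) : ℤ×ℤ) + (1,0) = (1,2) from by norm_num [Prod.ext_iff],
        show ((0,2) : ℤ×ℤ) - (1,0) = (-1,2) from by norm_num [Prod.ext_iff],
        show ((0,2) : ℤ×ℤ) + (0,1) = (0,3) from by norm_num [Prod.ext_iff],
        show ((0,2) : ℤ×ℤ) - (0,1) = (0,1) from by norm_num [Prod.ext_iff]] at h
    exact h
  have H1 : Real.pi * a (1,1) = (Real.pi * a (2,1) + Real.pi * a (1,2)
      + Real.pi * a (0,1) + Real.pi * a (1,0))/4 := by linear_combination Real.pi * h1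
  have H2 : Real.pi * a (2,0) = (Real.pi * a (3,0) + Real.pi * a (1,0)
      + Real.pi * a (2,1) + Real.pi * a (2,-1))/4 := by linear_combination Real.pi * h2
  have H3 : Real.pi * a (0,2) = (Real.pi * a (0,3) + Real.pi * a (0,1)
      + Real.pi * a (1,2) + Real.pi * a (-1,2))/4 := by linear_combination Real.pi * h3
  have z11 : znorm (1,1) = Real.sqrt 2 := by norm_num [znorm]
  have z20 : znorm (2,0) = 2 := by
    rw [znorm, show (((2:ℤ),(0:ℤ)).1 : ℝ)^2 + (((2:ℤ),(0:ℤ)).2 : ℝ)^2 = 2^2 by norm_num,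
      Real.sqrt_sq (by norm_num : (0:ℝ) ≤ 2)]
  have z02 : znorm (0,2) = 2 := by
    rw [znorm, show (((0:ℤ),(2:ℤ)).1 : ℝ)^2 + (((0:ℤ),(2:ℤ)).2 : ℝ)^2 = 2^2 by norm_num,
      Real.sqrt_sq (by norm_num : (0:ℝ) ≤ 2)]
  have z30 : znorm (3,0) = 3 := by
    rw [znorm, show (((3:ℤ),(0:ℤ)).1 : ℝ)^2 + (((3:ℤ),(0:ℤ)).2 : ℝ)^2 = 3^2 by norm_num,
      Real.sqrt_sq (by norm_num : (0:ℝ) ≤ 3)]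
  have z03 : znorm (0,3) = 3 := by
    rw [znorm, show (((0:ℤ),(3:ℤ)).1 : ℝ)^2 + (((0:ℤ),(3:ℤ)).2 : ℝ)^2 = 3^2 by norm_num,
      Real.sqrt_sq (by norm_num : (0:ℝ) ≤ 3)]
  have z2m1 : znorm (2,-1) = Real.sqrt 5 := by norm_num [znorm]
  have zm12 : znorm (-1,2) = Real.sqrt 5 := by norm_num [znorm]
  have b11 := conv (1,1) (by norm_num [Prod.ext_iff])
  rw [z11, Real.log_sqrt (by norm_num : (0:ℝ) ≤ 2),
    Real.sq_sqrt (by norm_num : (0:ℝ) ≤ 2)] at b11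
  have b20 := conv (2,0) (by norm_num [Prod.ext_iff])
  rw [z20] at b20
  have b02 := conv (0,2) (by norm_num [Prod.ext_iff])
  rw [z02] at b02
  have b30 := conv (3,0) (by norm_num [Prod.ext_iff])
  rw [z30] at b30
  have b03 := conv (0,3) (by norm_num [Prod.ext_iff])
  rw [z03] at b03
  have b2m1 := conv (2,-1) (by norm_num [Prod.ext_iff])
  rw [z2m1, Real.log_sqrt (by norm_num : (0:ℝ) ≤ 5),
    Real.sq_sqrt (by norm_num : (0:ℝ) ≤ 5)] at b2m1
  have bm12 := conv (-1,2) (by norm_num [Prod.ext_iff])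
  rw [zm12, Real.log_sqrt (by norm_num : (0:ℝ) ≤ 5),
    Real.sq_sqrt (by norm_num : (0:ℝ) ≤ 5)] at bm12
  obtain ⟨c11, d11⟩ := abs_le.mp b11
  obtain ⟨c20, d20⟩ := abs_le.mp b20
  obtain ⟨c02, d02⟩ := abs_le.mp b02
  obtain ⟨c30, d30⟩ := abs_le.mp b30
  obtain ⟨c03, d03⟩ := abs_le.mp b03
  obtain ⟨c2m1, d2m1⟩ := abs_le.mp b2m1
  obtain ⟨cm12, dm12⟩ := abs_le.mp bm12
  have l45 : 4 * Real.log 3 + 2 * Real.log 5 ≤ 11 * Real.log 2 := by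
    have h := Real.log_le_log (by norm_num : (0:ℝ) < 2025) (by norm_num : (2025:ℝ) ≤ 2048)
    rw [show (2025:ℝ) = 3^4 * 5^2 by norm_num, show (2048:ℝ) = 2^11 by norm_num,
      Real.log_mul (by positivity) (by positivity), Real.log_pow, Real.log_pow,
      Real.log_pow] at h
    push_cast at h
    linarith
  have c1 := Real.log_two_gt_d9
  have c2 := Real.log_two_lt_d9
  linarith [H1, H2, H3, c11, d11, c20, d20, c02, d02, c30, d30, c03, d03,
    c2m1, d2m1, cm12, dm12, l45, c1, c2]

set_option maxHeartbeats 1000000 in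
lemma point_bound' (a : ℤ × ℤ → ℝ) (κ lam : ℝ) (hlam0 : 0 ≤ lam)
    (haexp : ∀ z : ℤ × ℤ, z ≠ 0 →
      |a z - (2 / Real.pi) * Real.log (znorm z) - κ| ≤ lam / (znorm z) ^ 2)
    (hcert : 2 * Real.log 2 - 5/4 ≤ Real.pi * lam)
    (x : ℤ × ℤ) (r : ℝ) (hr1 : 1 ≤ r) (hr : 2 * (znorm x + 1) ≤ r)
    (y : ℤ × ℤ) (hfar : ¬ zdist y x < r) (q : ℤ × ℤ) (hadj : Adj y q)
    (hnear : zdist q x < r) :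
    |a y - ((2 / Real.pi) * Real.log r + κ)|
      ≤ (5 / (2 * Real.pi) + 2 * lam) * ((znorm x + 1) / r) := by
  have hπ : (0:ℝ) < Real.pi := Real.pi_pos
  have hx0 : 0 ≤ znorm x := znorm_nonneg' x
  have hr2 : (2:ℝ) ≤ r := by linarith
  have hrpos : (0:ℝ) < r := by linarith
  set A := (2 / Real.pi) * Real.log r + κ with hA
  set B := (5 / (2 * Real.pi) + 2 * lam) * ((znorm x + 1) / r) with hB
  have hyx : r ≤ znorm (y - x) := not_lt.mp hfar
  have tri1 : znorm (y - x) ≤ znorm y + znorm x := by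
    have h := znorm_add_le' y (-x)
    rw [znorm_neg'] at h
    simpa [sub_eq_add_neg] using h
  have hn_low : r - znorm x ≤ znorm y := by linarith
  have hxhalf : znorm x ≤ r/2 - 1 := by linarith
  have hn1 : 1 ≤ znorm y := by linarith
  have hnpos : (0:ℝ) < znorm y := by linarith
  have hy0 : y ≠ 0 := by
    intro h
    rw [h] at hnpos
    norm_num [znorm] at hnpos
  have hyq : znorm (y - q) = 1 := znorm_adj' y q hadj
  have hqx : znorm (q - x) < r := hnear
  have hn_high : znorm y ≤ r + znorm x + 1 := by
    have e : y = (y - q) + ((q - x) + x) := by ring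
    calc znorm y = znorm ((y - q) + ((q - x) + x)) := by rw [← e]
      _ ≤ znorm (y - q) + znorm ((q - x) + x) := znorm_add_le' _ _
      _ ≤ znorm (y - q) + (znorm (q - x) + znorm x) := by
          linarith [znorm_add_le' (q - x) x]
      _ ≤ r + znorm x + 1 := by rw [hyq]; linarith
  set n := znorm y with hn
  have hexp := haexp y hy0
  have step1 : |a y - A| ≤ lam / n^2 + (2/Real.pi) * |Real.log n - Real.log r| := by
    have e : a y - A = (a y - (2 / Real.pi) * Real.log n - κ)
        + (2/Real.pi) * (Real.log n - Real.log r) := by rw [hA]; ring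
    rw [e]
    refine le_trans (abs_add_le _ _) ?_
    rw [abs_mul, abs_of_pos (by positivity : (0:ℝ) < 2/Real.pi)]
    linarith [hexp]
  have hεpos : (0:ℝ) ≤ (znorm x + 1)/r := by positivity
  rcases le_total r n with hc | hc
  · -- r ≤ n
    have hlogge : Real.log r ≤ Real.log n := Real.log_le_log hrpos hc
    have habs : |Real.log n - Real.log r| = Real.log n - Real.log r :=
      abs_of_nonneg (by linarith)
    have hlog : Real.log n - Real.log r ≤ (znorm x + 1)/r := by
      have h1 : Real.log (n/r) ≤ n/r - 1 := Real.log_le_sub_one_of_pos (by positivity)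
      have h2 : Real.log (n/r) = Real.log n - Real.log r :=
        Real.log_div (by positivity) (by positivity)
      have h3 : n/r - 1 = (n - r)/r := by field_simp
      have h4 : (n - r)/r ≤ (znorm x + 1)/r := by gcongr <;> linarith
      linarith
    have hlam1 : lam / n^2 ≤ lam * ((znorm x + 1)/r) := by
      have h1 : lam / n^2 ≤ lam / r^2 := by gcongr <;> nlinarith
      have h2 : (1:ℝ)/r^2 ≤ (znorm x + 1)/r := by
        rw [div_le_div_iff₀ (by positivity) hrpos]
        nlinarith
      have h3 : lam / r^2 = lam * (1/r^2) := by ring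
      have h4 : lam * (1/r^2) ≤ lam * ((znorm x + 1)/r) :=
        mul_le_mul_of_nonneg_left h2 hlam0
      linarith
    have h25 : (2:ℝ)/Real.pi ≤ 5/(2*Real.pi) := by
      rw [div_le_div_iff₀ hπ (by positivity)]
      nlinarith
    have hlog2 : (2/Real.pi) * (Real.log n - Real.log r)
        ≤ (5/(2*Real.pi)) * ((znorm x + 1)/r) := by
      calc (2/Real.pi) * (Real.log n - Real.log r)
          ≤ (2/Real.pi) * ((znorm x + 1)/r) :=
            mul_le_mul_of_nonneg_left hlog (by positivity)
        _ ≤ (5/(2*Real.pi)) * ((znorm x + 1)/r) :=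
            mul_le_mul_of_nonneg_right h25 hεpos
    have hfin : lam * ((znorm x + 1)/r) ≤ 2*lam * ((znorm x + 1)/r) :=
      mul_le_mul_of_nonneg_right (by linarith) hεpos
    rw [habs] at step1
    have hBsplit : B = (5/(2*Real.pi)) * ((znorm x + 1)/r)
        + 2*lam * ((znorm x + 1)/r) := by rw [hB]; ring
    linarith
  · -- n ≤ r
    set v := znorm x / r with hv
    have hv0 : (0:ℝ) ≤ v := by positivity
    have hv2 : v ≤ 1/2 := by
      rw [hv, div_le_iff₀ hrpos]; linarith
    have hrv : r * (1 - v) = r - znorm x := by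
      rw [hv]; field_simp
    have hlogle : Real.log n ≤ Real.log r := Real.log_le_log hnpos hc
    have habs : |Real.log n - Real.log r| = Real.log r - Real.log n := by
      rw [abs_sub_comm]; exact abs_of_nonneg (by linarith)
    have hlog : Real.log r - Real.log n ≤ 2 * Real.log 2 * v := by
      have hpos1 : (0:ℝ) < 1 - v := by linarith
      have h1 : Real.log (r * (1 - v)) ≤ Real.log n :=
        Real.log_le_log (mul_pos hrpos hpos1) (by rw [hrv]; linarith)
      have h2 : Real.log (r * (1 - v)) = Real.log r + Real.log (1 - v) :=
        Real.log_mul (ne_of_gt hrpos) (ne_of_gt hpos1)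
      have h3 := log_one_sub_ge' v hv0 hv2
      linarith
    have hlam1 : lam / n^2 ≤ 2 * lam * (1/r) := by
      have hn_half : r/2 ≤ n := by linarith
      have h1 : lam / n^2 ≤ lam / (r/2)^2 := by gcongr <;> nlinarith
      have h2 : lam / (r/2)^2 ≤ 2 * lam * (1/r) := by
        rw [div_le_iff₀ (by positivity : (0:ℝ) < (r/2)^2)]
        have e : 2 * lam * (1/r) * (r/2)^2 = lam * (r/2) := by
          field_simp
        rw [e]
        nlinarith [mul_nonneg hlam0 (show (0:ℝ) ≤ r/2 - 1 by linarith)]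
      linarith
    have hsplit : (znorm x + 1)/r = v + 1/r := by
      rw [hv]; field_simp
    have hkey : (4 * Real.log 2)/Real.pi ≤ 5/(2*Real.pi) + 2*lam := by
      have e1 : (4*Real.log 2)/Real.pi - 5/(2*Real.pi)
          = (4*Real.log 2 - 5/2)/Real.pi := by ring
      have e2 : (4*Real.log 2 - 5/2)/Real.pi ≤ 2*lam := by
        rw [div_le_iff₀ hπ]; nlinarith [hcert]
      linarith
    have hterm1 : (2/Real.pi) * (Real.log r - Real.log n)
        ≤ (5/(2*Real.pi) + 2*lam) * v := by
      have h1 : (2/Real.pi) * (Real.log r - Real.log n)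
          ≤ (2/Real.pi) * (2 * Real.log 2 * v) :=
        mul_le_mul_of_nonneg_left hlog (by positivity)
      have h2 : (2/Real.pi) * (2 * Real.log 2 * v) = ((4 * Real.log 2)/Real.pi) * v := by
        ring
      have h3 : ((4 * Real.log 2)/Real.pi) * v ≤ (5/(2*Real.pi) + 2*lam) * v :=
        mul_le_mul_of_nonneg_right hkey hv0
      linarith
    have hterm2 : lam / n^2 ≤ (5/(2*Real.pi) + 2*lam) * (1/r) := by
      have h0 : (0:ℝ) ≤ 5/(2*Real.pi) := by positivity
      have h1 : 2*lam * (1/r) ≤ (5/(2*Real.pi) + 2*lam) * (1/r) :=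
        mul_le_mul_of_nonneg_right (by linarith) (by positivity)
      linarith
    have hBsplit : B = (5/(2*Real.pi) + 2*lam) * v + (5/(2*Real.pi) + 2*lam) * (1/r) := by
      rw [hB, hsplit]; ring
    rw [habs] at step1
    linarith


/-- Lemma A.2: for the potential kernel `𝔞` of simple random walk on `ℤ²` and any
probability measure `w` on `C_x(r)` (the exterior boundary of the disk `D_x(r)`),
if `r ≥ 2(|x|+1)` then `|∑_y w(y) 𝔞(y) - 𝔞'(r)| ≤ (5/(2π) + 2λ)(|x|+1)/r`, where
`𝔞'(r) = (2/π) log r + κ`. -/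
theorem stmt14 (a : ℤ × ℤ → ℝ) (κ lam : ℝ)
    (hlam0 : 0 ≤ lam) (hlam : lam ≤ 0.07)
    (ha0 : a 0 = 0) (haharm : HarmonicOn a {z | z ≠ 0})
    (haexp : ∀ z : ℤ × ℤ, z ≠ 0 →
      |a z - (2 / Real.pi) * Real.log (znorm z) - κ| ≤ lam / (znorm z) ^ 2)
    (x : ℤ × ℤ) (r : ℝ) (hr1 : 1 ≤ r) (hr : 2 * (znorm x + 1) ≤ r)
    (F : Finset (ℤ × ℤ))
    (hF : ∀ y ∈ F, ¬ zdist y x < r ∧ ∃ q : ℤ × ℤ, Adj y q ∧ zdist q x < r)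
    (w : ℤ × ℤ → ℝ) (hw0 : ∀ y ∈ F, 0 ≤ w y) (hw1 : (∑ y ∈ F, w y) = 1) :
    |(∑ y ∈ F, w y * a y) - ((2 / Real.pi) * Real.log r + κ)|
      ≤ (5 / (2 * Real.pi) + 2 * lam) * ((znorm x + 1) / r) := by
  have hcert := lam_lower' a κ lam haharm haexp
  set A := (2 / Real.pi) * Real.log r + κ with hA
  set B := (5 / (2 * Real.pi) + 2 * lam) * ((znorm x + 1) / r) with hB
  have hpt : ∀ y ∈ F, |a y - A| ≤ B := by
    intro y hy
    obtain ⟨hfar, q, hadj, hnear⟩ := hF y hy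
    exact point_bound' a κ lam hlam0 haexp hcert x r hr1 hr y hfar q hadj hnear
  have hsum : (∑ y ∈ F, w y * a y) - A = ∑ y ∈ F, w y * (a y - A) := by
    simp only [mul_sub]
    rw [Finset.sum_sub_distrib, ← Finset.sum_mul, hw1, one_mul]
  rw [hsum]
  calc |∑ y ∈ F, w y * (a y - A)| ≤ ∑ y ∈ F, |w y * (a y - A)| :=
        Finset.abs_sum_le_sum_abs _ _
    _ = ∑ y ∈ F, w y * |a y - A| := Finset.sum_congr rfl (fun y hy => by
        rw [abs_mul, abs_of_nonneg (hw0 y hy)])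
    _ ≤ ∑ y ∈ F, w y * B := Finset.sum_le_sum (fun y hy =>
        mul_le_mul_of_nonneg_left (hpt y hy) (hw0 y hy))
    _ = B := by rw [← Finset.sum_mul, hw1, one_mul]
end
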